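/- Let n ≥ 2 and let A be a symmetric n×n complex matrix (Aᵀ = A) with rank A = 2. Consider the ℂ-subspace T of n×n complex matrices defined by T = {B : Bᵀ = B and for every v ∈ ℂⁿ with A·v = 0 one has B·v ∈ range(A·−)}, where A·v = Matrix.mulVec A v and range(A·−) is the column space of A. Then finrank_ℂ T = 2n − 1. -/

import Mathlib

open Matrix

lemma exists_adapted_basis (n : ℕ) (hn : 2 ≤ n) (K : Submodule ℂ (Fin n → ℂ))
    (hK : Module.finrank ℂ K = n - 2) :
    ∃ b : Module.Basis (Fin n) ℂ (Fin n → ℂ),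
      (∀ j : Fin n, 2 ≤ (j : ℕ) → b j ∈ K) ∧
      ∀ v : Fin n → ℂ, (∑ j, v j • b j) ∈ K → ∀ j : Fin n, (j : ℕ) < 2 → v j = 0 := by
  obtain ⟨W, hWc⟩ := K.exists_isCompl
  have hpi : Module.finrank ℂ (Fin n → ℂ) = n := by simp
  have hdim : Module.finrank ℂ K + Module.finrank ℂ W = n := by
    rw [Submodule.finrank_add_eq_of_isCompl hWc, hpi]
  have hWr : Module.finrank ℂ W = 2 := by omega
  let bW : Module.Basis (Fin 2) ℂ W := Module.finBasisOfFinrankEq ℂ W hWr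
  let bK : Module.Basis (Fin (n - 2)) ℂ K := Module.finBasisOfFinrankEq ℂ K hK
  let e : (Fin 2 ⊕ Fin (n - 2)) ≃ Fin n := finSumFinEquiv.trans (finCongr (by omega))
  let b : Module.Basis (Fin n) ℂ (Fin n → ℂ) :=
    ((bW.prod bK).map (Submodule.prodEquivOfIsCompl W K hWc.symm)).reindex e
  have hWmem : ∀ j : Fin n, (j : ℕ) < 2 → b j ∈ W := by
    intro j hj
    have hb : b j = (Submodule.prodEquivOfIsCompl W K hWc.symm) ((bW.prod bK) (e.symm j)) := by
      simp [b, Module.Basis.reindex_apply, Module.Basis.map_apply]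
    rcases h : e.symm j with i | i
    · rw [h] at hb
      rw [hb]
      simp [Module.Basis.prod_apply, Submodule.coe_prodEquivOfIsCompl]
    · exfalso
      have : j = e (Sum.inr i) := by rw [← h]; simp
      have hv : (j : ℕ) = 2 + (i : ℕ) := by
        rw [this]
        simp [e, finSumFinEquiv]
      omega
  have hKmem : ∀ j : Fin n, 2 ≤ (j : ℕ) → b j ∈ K := by
    intro j hj
    have hb : b j = (Submodule.prodEquivOfIsCompl W K hWc.symm) ((bW.prod bK) (e.symm j)) := by
      simp [b, Module.Basis.reindex_apply, Module.Basis.map_apply]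
    rcases h : e.symm j with i | i
    · exfalso
      have : j = e (Sum.inl i) := by rw [← h]; simp
      have hv : (j : ℕ) = (i : ℕ) := by
        rw [this]
        simp [e, finSumFinEquiv]
      have := i.isLt
      omega
    · rw [h] at hb
      rw [hb]
      simp [Module.Basis.prod_apply, Submodule.coe_prodEquivOfIsCompl]
  refine ⟨b, hKmem, ?_⟩
  intro v hv
  have hsplit : (∑ j, v j • b j)
      = (∑ j ∈ Finset.univ.filter (fun j : Fin n => (j : ℕ) < 2), v j • b j)
        + (∑ j ∈ Finset.univ.filter (fun j : Fin n => ¬ (j : ℕ) < 2), v j • b j) :=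
    (Finset.sum_filter_add_sum_filter_not _ _ _).symm
  set y := ∑ j ∈ Finset.univ.filter (fun j : Fin n => (j : ℕ) < 2), v j • b j with hy
  set z := ∑ j ∈ Finset.univ.filter (fun j : Fin n => ¬ (j : ℕ) < 2), v j • b j with hz
  have hzK : z ∈ K := by
    refine Submodule.sum_mem _ ?_
    intro j hj
    exact Submodule.smul_mem _ _ (hKmem j (by have := (Finset.mem_filter.mp hj).2; omega))
  have hyW : y ∈ W := by
    refine Submodule.sum_mem _ ?_
    intro j hj
    exact Submodule.smul_mem _ _ (hWmem j (by simpa using (Finset.mem_filter.mp hj).2))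
  have hyK : y ∈ K := by
    have : y = (∑ j, v j • b j) - z := by rw [hsplit]; ring
    rw [this]
    exact Submodule.sub_mem _ hv hzK
  have hy0 : y = 0 := Submodule.disjoint_def.mp hWc.disjoint y hyK hyW
  have hyfull : y = ∑ j : Fin n, (if (j : ℕ) < 2 then v j else 0) • b j := by
    rw [hy, Finset.sum_filter]
    refine Finset.sum_congr rfl ?_
    intro j _
    split <;> simp
  have hrepr := b.repr_sum_self (fun j : Fin n => if (j : ℕ) < 2 then v j else 0)
  rw [← hyfull, hy0] at hrepr
  simp only [map_zero] at hrepr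
  intro j hj
  have := congrFun hrepr j
  simpa [hj] using this.symm

/-- Let `n ≥ 2` and `A` a symmetric `n×n` complex matrix of rank `2`.  The
subspace `T = {B : Bᵀ = B ∧ B·(ker A) ⊆ im A}` of `n×n` complex matrices (the Zariski
tangent space at `A` to the cone of symmetric matrices of rank at most `2`) has
dimension `2n − 1`. -/
theorem dim_tangent_space_rank_two (n : ℕ) (hn : 2 ≤ n)
    (A : Matrix (Fin n) (Fin n) ℂ) (hA : A.transpose = A) (hrank : A.rank = 2)
    (T : Submodule ℂ (Matrix (Fin n) (Fin n) ℂ))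
    (hT : ∀ B : Matrix (Fin n) (Fin n) ℂ,
      B ∈ T ↔ (B.transpose = B ∧
        ∀ v : Fin n → ℂ, A.mulVec v = 0 → ∃ w : Fin n → ℂ, B.mulVec v = A.mulVec w)) :
    Module.finrank ℂ T = 2 * n - 1 := by
  classical
  haveI : NeZero n := ⟨by omega⟩
  have h0v : ((0 : Fin n) : ℕ) = 0 := rfl
  have h1v : ((1 : Fin n) : ℕ) = 1 := by
    rw [Fin.val_one']
    exact Nat.mod_eq_of_lt (by omega)
  have hne01 : (0 : Fin n) ≠ 1 := by
    intro h
    have := congrArg Fin.val h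
    rw [h0v, h1v] at this
    omega
  have hiv : ∀ i : Fin n, (i ≠ 0 ∧ i ≠ 1) ↔ 2 ≤ (i : ℕ) := by
    intro i
    simp only [Ne, Fin.ext_iff, h0v, h1v]
    omega
  set K := LinearMap.ker A.mulVecLin with hKdef
  have hrange2 : Module.finrank ℂ (LinearMap.range A.mulVecLin) = 2 := hrank
  have hKr : Module.finrank ℂ K = n - 2 := by
    have h := LinearMap.finrank_range_add_finrank_ker A.mulVecLin
    have hpi : Module.finrank ℂ (Fin n → ℂ) = n := by simp
    rw [hpi, hrange2] at h
    rw [hKdef]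
    omega
  obtain ⟨b, hbK, hbcoord⟩ := exists_adapted_basis n hn K hKr
  -- the change-of-basis matrix
  set P : Matrix (Fin n) (Fin n) ℂ := Matrix.of fun i j => (b j : Fin n → ℂ) i with hPdef
  have hPtoM : P = (Pi.basisFun ℂ (Fin n)).toMatrix ⇑b := by
    ext i j
    simp [hPdef, Module.Basis.toMatrix_apply]
  haveI hPinv : Invertible P := by
    rw [hPtoM]; exact (Pi.basisFun ℂ (Fin n)).invertibleToMatrix b
  have hPmulVec : ∀ v : Fin n → ℂ, P.mulVec v = ∑ j : Fin n, v j • (b j : Fin n → ℂ) := by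
    intro v
    ext i
    simp [hPdef, Matrix.mulVec, dotProduct, Finset.sum_apply, mul_comm]
  have hPTmulVec : ∀ y : Fin n → ℂ, ∀ i, (Pᵀ.mulVec y) i = (b i : Fin n → ℂ) ⬝ᵥ y := by
    intro y i
    simp [hPdef, Matrix.mulVec, dotProduct, Matrix.transpose_apply]
  have hPTinj : Function.Injective (Pᵀ.mulVec) := Matrix.mulVec_injective_of_invertible Pᵀ
  have hPT0 : ∀ x, Pᵀ.mulVec x = 0 → x = 0 := by
    intro x h
    apply hPTinj
    rw [h, Matrix.mulVec_zero]
  set D : Matrix (Fin n) (Fin n) ℂ := Pᵀ * A * P with hDdef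
  have hDmv : ∀ v, D.mulVec v = Pᵀ.mulVec (A.mulVec (P.mulVec v)) := by
    intro v
    rw [hDdef, Matrix.mulVec_mulVec, Matrix.mulVec_mulVec, Matrix.mul_assoc]
  -- the kernel of D
  have hker : ∀ v : Fin n → ℂ, D.mulVec v = 0 ↔ ∀ j : Fin n, (j : ℕ) < 2 → v j = 0 := by
    intro v
    constructor
    · intro h j hj
      have hA0 : A.mulVec (P.mulVec v) = 0 := by
        apply hPT0
        rw [← hDmv v, h]
      have hmem : P.mulVec v ∈ K := by
        rw [hKdef, LinearMap.mem_ker, Matrix.mulVecLin_apply]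
        exact hA0
      rw [hPmulVec] at hmem
      exact hbcoord v hmem j hj
    · intro h
      rw [hDmv]
      have hmem : P.mulVec v ∈ K := by
        rw [hPmulVec]
        refine Submodule.sum_mem _ ?_
        intro j _
        by_cases hj : (j : ℕ) < 2
        · rw [h j hj, zero_smul]
          exact Submodule.zero_mem _
        · exact Submodule.smul_mem _ _ (hbK j (by omega))
      have hA0 : A.mulVec (P.mulVec v) = 0 := by
        rw [hKdef, LinearMap.mem_ker, Matrix.mulVecLin_apply] at hmem
        exact hmem
      rw [hA0, Matrix.mulVec_zero]
  -- images of A land in coordinates < 2 after Pᵀ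
  have hAsub : ∀ u : Fin n → ℂ, ∀ i : Fin n, 2 ≤ (i : ℕ) → (Pᵀ.mulVec (A.mulVec u)) i = 0 := by
    intro u i hi
    rw [hPTmulVec, Matrix.dotProduct_mulVec]
    have hbi : A.mulVec (b i : Fin n → ℂ) = 0 := by
      have := hbK i hi
      rwa [hKdef, LinearMap.mem_ker, Matrix.mulVecLin_apply] at this
    have : (b i : Fin n → ℂ) ᵥ* A = 0 := by
      rw [← hA, Matrix.vecMul_transpose, hbi]
    rw [this, zero_dotProduct]
  -- rank of D
  have hDrank : Module.finrank ℂ (LinearMap.range D.mulVecLin) = 2 := by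
    have h1 : (Pᵀ * A * P).rank = (Pᵀ * A).rank :=
      Matrix.rank_mul_eq_left_of_isUnit_det P (Pᵀ * A) (Matrix.isUnit_det_of_invertible P)
    have h2 : (Pᵀ * A).rank = A.rank :=
      Matrix.rank_mul_eq_right_of_isUnit_det Pᵀ A (Matrix.isUnit_det_of_invertible Pᵀ)
    have : D.rank = 2 := by rw [hDdef, h1, h2, hrank]
    exact this
  -- the range of D
  have hrng : ∀ x : Fin n → ℂ, (∃ w, x = D.mulVec w) ↔ ∀ i : Fin n, 2 ≤ (i : ℕ) → x i = 0 := by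
    have hfwd : ∀ x : Fin n → ℂ, (∃ w, x = D.mulVec w) → ∀ i : Fin n, 2 ≤ (i : ℕ) → x i = 0 := by
      rintro x ⟨w, rfl⟩ i hi
      rw [hDmv]
      exact hAsub _ i hi
    intro x
    refine ⟨hfwd x, ?_⟩
    intro hx
    set ψ : (Fin n → ℂ) →ₗ[ℂ] (Fin 2 → ℂ) := LinearMap.funLeft ℂ ℂ (Fin.castLE hn) with hψ
    set φ : LinearMap.range D.mulVecLin →ₗ[ℂ] (Fin 2 → ℂ) :=
      ψ.comp (LinearMap.range D.mulVecLin).subtype with hφ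
    have hφinj : Function.Injective φ := by
      rw [← LinearMap.ker_eq_bot, eq_bot_iff]
      rintro ⟨y, hy⟩ hk
      simp only [LinearMap.mem_ker] at hk
      have hk' : ∀ i2 : Fin 2, y (Fin.castLE hn i2) = 0 := by
        intro i2
        exact congrFun hk i2
      refine Submodule.mem_bot _ |>.mpr ?_
      refine Subtype.ext ?_
      show y = 0
      funext i
      rw [Pi.zero_apply]
      by_cases hi : 2 ≤ (i : ℕ)
      · obtain ⟨w, hw⟩ := hy
        exact hfwd y ⟨w, by rw [← hw]; rfl⟩ i hi
      · have : i = Fin.castLE hn ⟨(i : ℕ), by omega⟩ := by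
          apply Fin.ext
          rfl
        rw [this]
        exact hk' _
    have hφsurj : Function.Surjective φ :=
      (LinearMap.injective_iff_surjective_of_finrank_eq_finrank
        (by rw [hDrank]; simp)).mp hφinj
    obtain ⟨⟨y, hy⟩, hyx⟩ := hφsurj (fun i2 => x (Fin.castLE hn i2))
    obtain ⟨w, hw⟩ := hy
    refine ⟨w, ?_⟩
    have hyD : y = D.mulVec w := by rw [← hw]; rfl
    have hyzero : ∀ i : Fin n, 2 ≤ (i : ℕ) → y i = 0 := hfwd y ⟨w, hyD⟩
    have hyx' : ∀ i2 : Fin 2, y (Fin.castLE hn i2) = x (Fin.castLE hn i2) := by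
      intro i2
      exact congrFun hyx i2
    rw [← hyD]
    funext i
    by_cases hi : 2 ≤ (i : ℕ)
    · rw [hx i hi, hyzero i hi]
    · have heq : i = Fin.castLE hn ⟨(i : ℕ), by omega⟩ := by apply Fin.ext; rfl
      rw [heq, hyx' _]
  -- the congruence maps
  set Φf : Matrix (Fin n) (Fin n) ℂ →ₗ[ℂ] Matrix (Fin n) (Fin n) ℂ :=
    { toFun := fun B => Pᵀ * B * P
      map_add' := by
        intro X Y
        show Pᵀ * (X + Y) * P = Pᵀ * X * P + Pᵀ * Y * P
        rw [Matrix.mul_add, Matrix.add_mul]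
      map_smul' := by
        intro c X
        show Pᵀ * (c • X) * P = c • (Pᵀ * X * P)
        rw [Matrix.mul_smul, Matrix.smul_mul] } with hΦf
  set Φg : Matrix (Fin n) (Fin n) ℂ →ₗ[ℂ] Matrix (Fin n) (Fin n) ℂ :=
    { toFun := fun M => ⅟Pᵀ * M * ⅟P
      map_add' := by
        intro X Y
        show ⅟Pᵀ * (X + Y) * ⅟P = ⅟Pᵀ * X * ⅟P + ⅟Pᵀ * Y * ⅟P
        rw [Matrix.mul_add, Matrix.add_mul]
      map_smul' := by
        intro c X
        show ⅟Pᵀ * (c • X) * ⅟P = c • (⅟Pᵀ * X * ⅟P)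
        rw [Matrix.mul_smul, Matrix.smul_mul] } with hΦg
  have hΦf_apply : ∀ B, Φf B = Pᵀ * B * P := fun _ => rfl
  have hΦg_apply : ∀ M, Φg M = ⅟Pᵀ * M * ⅟P := fun _ => rfl
  have hfg : ∀ M, Φf (Φg M) = M := by
    intro M
    rw [hΦf_apply, hΦg_apply, Matrix.mul_assoc, Matrix.mul_assoc, invOf_mul_self, Matrix.mul_one,
      ← Matrix.mul_assoc, mul_invOf_self, Matrix.one_mul]
  have hgf : ∀ B, Φg (Φf B) = B := by
    intro B
    rw [hΦf_apply, hΦg_apply, Matrix.mul_assoc, Matrix.mul_assoc, mul_invOf_self, Matrix.mul_one,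
      ← Matrix.mul_assoc, invOf_mul_self, Matrix.one_mul]
  have hΦfmv : ∀ (B : Matrix (Fin n) (Fin n) ℂ) (u : Fin n → ℂ),
      (Φf B).mulVec u = Pᵀ.mulVec (B.mulVec (P.mulVec u)) := by
    intro B u
    rw [hΦf_apply, Matrix.mulVec_mulVec, Matrix.mulVec_mulVec, Matrix.mul_assoc]
  have hΦft : ∀ B : Matrix (Fin n) (Fin n) ℂ, Φf Bᵀ = (Φf B)ᵀ := by
    intro B
    rw [hΦf_apply, hΦf_apply, Matrix.transpose_mul, Matrix.transpose_mul,
      Matrix.transpose_transpose, Matrix.mul_assoc]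
  -- the membership characterization
  have hchar : ∀ B : Matrix (Fin n) (Fin n) ℂ, B ∈ T ↔
      ((Φf B)ᵀ = Φf B ∧ ∀ i j : Fin n, 2 ≤ (i : ℕ) → 2 ≤ (j : ℕ) → Φf B i j = 0) := by
    intro B
    rw [hT B]
    constructor
    · rintro ⟨hsym, hcond⟩
      constructor
      · rw [← hΦft, hsym]
      · intro i j hi hj
        set u : Fin n → ℂ := Pi.single j 1 with hu
        have hu0 : ∀ jj : Fin n, (jj : ℕ) < 2 → u jj = 0 := by
          intro jj hjj
          rw [hu]
          apply Pi.single_eq_of_ne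
          intro hjj'
          rw [hjj'] at hjj
          omega
        have hAPu : A.mulVec (P.mulVec u) = 0 := by
          apply hPT0
          rw [← hDmv]
          exact (hker u).mpr hu0
        obtain ⟨w, hw⟩ := hcond (P.mulVec u) hAPu
        have h0 : ((Φf B).mulVec u) i = 0 := by
          rw [hΦfmv, hw]
          exact hAsub w i hi
        rw [hu, Matrix.mulVec_single] at h0
        simpa using h0
    · rintro ⟨hsymC, hzero⟩
      have hinj : Function.Injective Φf := by
        intro X Y hXY
        have := congrArg Φg hXY
        rwa [hgf, hgf] at this
      constructor
      · apply hinj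
        rw [hΦft, hsymC]
      · intro v hv
        set u : Fin n → ℂ := (⅟P).mulVec v with hu
        have hPu : P.mulVec u = v := by
          rw [hu, Matrix.mulVec_mulVec, mul_invOf_self, Matrix.one_mulVec]
        have hu0 : ∀ j : Fin n, (j : ℕ) < 2 → u j = 0 := by
          apply (hker u).mp
          rw [hDmv, hPu, hv, Matrix.mulVec_zero]
        have hCui : ∀ i : Fin n, 2 ≤ (i : ℕ) → ((Φf B).mulVec u) i = 0 := by
          intro i hi
          show (fun j => Φf B i j) ⬝ᵥ u = 0
          apply Finset.sum_eq_zero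
          intro j _
          show Φf B i j * u j = 0
          by_cases hj : (j : ℕ) < 2
          · rw [hu0 j hj, mul_zero]
          · rw [hzero i j hi (by omega), zero_mul]
        obtain ⟨w, hw⟩ := (hrng ((Φf B).mulVec u)).mpr hCui
        refine ⟨P.mulVec w, ?_⟩
        apply hPTinj
        have h1 : Pᵀ.mulVec (B.mulVec v) = (Φf B).mulVec u := by rw [hΦfmv, hPu]
        rw [h1, hw, hDmv]
  -- the model space
  set F : ((Fin n → ℂ) × (Fin n → ℂ)) →ₗ[ℂ] ℂ :=
    ((LinearMap.proj (0 : Fin n)).comp (LinearMap.snd ℂ (Fin n → ℂ) (Fin n → ℂ))) -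
      ((LinearMap.proj (1 : Fin n)).comp (LinearMap.fst ℂ (Fin n → ℂ) (Fin n → ℂ))) with hF
  have hF_apply : ∀ p : (Fin n → ℂ) × (Fin n → ℂ), F p = p.2 0 - p.1 1 := by
    intro p; rfl
  have hFsurj : Function.Surjective F := by
    intro c
    exact ⟨(0, fun _ => c), by rw [hF_apply]; simp⟩
  have hWk : Module.finrank ℂ (LinearMap.ker F) = 2 * n - 1 := by
    have h := LinearMap.finrank_range_add_finrank_ker F
    have h1 : Module.finrank ℂ (LinearMap.range F) = 1 := by
      rw [LinearMap.range_eq_top.mpr hFsurj]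
      simp
    have h2 : Module.finrank ℂ ((Fin n → ℂ) × (Fin n → ℂ)) = n + n := by
      simp [Module.finrank_prod]
    rw [h1, h2] at h
    omega
  -- the linear equivalence between T and ker F
  set Mk : (Fin n → ℂ) → (Fin n → ℂ) → Matrix (Fin n) (Fin n) ℂ := fun a c =>
    Matrix.of fun i j =>
      if i = 0 then a j else if i = 1 then c j else if j = 0 then a i else if j = 1 then c i
        else 0 with hMk
  have hMk0 : ∀ (a c : Fin n → ℂ) (j : Fin n), Mk a c 0 j = a j := by
    intro a c j
    simp [hMk]
  have hMk1 : ∀ (a c : Fin n → ℂ) (j : Fin n), Mk a c 1 j = c j := by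
    intro a c j
    simp only [hMk, Matrix.of_apply]
    rw [if_neg hne01.symm]
    simp
  set ρ : Matrix (Fin n) (Fin n) ℂ →ₗ[ℂ] ((Fin n → ℂ) × (Fin n → ℂ)) :=
    { toFun := fun X => (fun j => Φf X 0 j, fun j => Φf X 1 j)
      map_add' := by
        intro X Y
        simp only [map_add]
        rfl
      map_smul' := by
        intro c X
        simp only [_root_.map_smul, RingHom.id_apply]
        rfl } with hρ
  have hρ_apply : ∀ X, ρ X = (fun j => Φf X 0 j, fun j => Φf X 1 j) := fun _ => rfl
  -- symmetry of entries for members of T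
  have hsymE : ∀ B : Matrix (Fin n) (Fin n) ℂ, (Φf B)ᵀ = Φf B →
      ∀ i j : Fin n, Φf B i j = Φf B j i := by
    intro B hs i j
    conv_lhs => rw [← hs]
    rw [Matrix.transpose_apply]
  let E : T ≃ₗ[ℂ] LinearMap.ker F :=
    { toFun := fun B => ⟨ρ B.1, by
        have hc := (hchar B.1).mp B.2
        rw [LinearMap.mem_ker, hF_apply, hρ_apply]
        show Φf B.1 1 0 - Φf B.1 0 1 = 0
        rw [hsymE B.1 hc.1 1 0, sub_self]⟩
      map_add' := by
        intro X Y
        apply Subtype.ext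
        show ρ ↑(X + Y) = ρ ↑X + ρ ↑Y
        rw [Submodule.coe_add, map_add]
      map_smul' := by
        intro c X
        apply Subtype.ext
        show ρ ↑(c • X) = c • (ρ ↑X)
        rw [Submodule.coe_smul, _root_.map_smul]
      invFun := fun p => ⟨Φg (Mk p.1.1 p.1.2), by
        have hba : p.1.2 0 = p.1.1 1 := by
          have hp := p.2
          rw [LinearMap.mem_ker, hF_apply] at hp
          exact sub_eq_zero.mp hp
        rw [hchar, hfg]
        constructor
        · ext i j
          rw [Matrix.transpose_apply]
          show Mk p.1.1 p.1.2 j i = Mk p.1.1 p.1.2 i j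
          simp only [hMk, Matrix.of_apply]
          split_ifs <;> subst_vars <;>
            first
              | rfl
              | exact hba
              | exact hba.symm
              | exact absurd ‹(0 : Fin n) = 1› hne01
              | exact absurd ‹(1 : Fin n) = 0› hne01.symm
        · intro i j hi hj
          have hi' := (hiv i).mpr hi
          have hj' := (hiv j).mpr hj
          show Mk p.1.1 p.1.2 i j = 0
          simp only [hMk, Matrix.of_apply]
          rw [if_neg hi'.1, if_neg hi'.2, if_neg hj'.1, if_neg hj'.2]⟩
      left_inv := by
        intro B
        apply Subtype.ext
        have hc := (hchar B.1).mp B.2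
        have hMkC : Mk (fun j => Φf B.1 0 j) (fun j => Φf B.1 1 j) = Φf B.1 := by
          ext i j
          simp only [hMk, Matrix.of_apply]
          split_ifs with h1 h2 h3 h4
          · subst h1; rfl
          · subst h2; rfl
          · subst h3
            exact hsymE B.1 hc.1 0 i
          · subst h4
            exact hsymE B.1 hc.1 1 i
          · exact (hc.2 i j ((hiv i).mp ⟨h1, h2⟩) ((hiv j).mp ⟨h3, h4⟩)).symm
        show Φg (Mk (fun j => Φf B.1 0 j) (fun j => Φf B.1 1 j)) = ↑B
        rw [hMkC]
        exact hgf _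
      right_inv := by
        intro p
        apply Subtype.ext
        show ρ (Φg (Mk p.1.1 p.1.2)) = p.1
        rw [hρ_apply, hfg]
        refine Prod.ext ?_ ?_ <;> funext j
        · show Mk (↑p : (Fin n → ℂ) × (Fin n → ℂ)).1 (↑p : (Fin n → ℂ) × (Fin n → ℂ)).2 0 j = _
          rw [hMk0]
        · show Mk (↑p : (Fin n → ℂ) × (Fin n → ℂ)).1 (↑p : (Fin n → ℂ) × (Fin n → ℂ)).2 1 j = _
          rw [hMk1] }
  rw [E.finrank_eq, hWk]
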